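/- If every run of a UCA A on a word w eventually reaches and stays at a constant odd rank in the tracked ranking sequence of an accepting run of the rank-based NBA C on w, then w ∈ L(A): no run of A on w takes rejecting transitions infinitely often. Combined with the breakpoint mechanism ensuring no run stays forever at an even rank in the obligation set O, this yields L(C) ⊆ L(A). -/
import Mathlib


/-- `ρ` is a run of the automaton with transitions `δ` from `q` on word `w`. -/
def IsRun {A Q : Type*} (δ : Q → A → Set Q) (q : Q) (w : ℕ → A) (ρ : ℕ → Q) : Prop :=
  ρ 0 = q ∧ ∀ i, ρ (i + 1) ∈ δ (ρ i) (w i)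

/-- `ρ` is rejecting: it takes rejecting transitions (given by `γ`) infinitely often. -/
def RejRun {A Q : Type*} (γ : Q → A → Set Q) (w : ℕ → A) (ρ : ℕ → Q) : Prop :=
  ∀ N : ℕ, ∃ i ≥ N, ρ (i + 1) ∈ γ (ρ i) (w i)

/-- If every run of the UCA `A = (δ, γ)` on `w`, tracked through the ranking
sequence `rk` of an accepting run of the rank-based NBA `C`, eventually stays at a
constant odd rank, and ranks drop to at most the next lower even number on rejecting
transitions, then `w ∈ L(A)`: no run of `A` on `w` is rejecting. -/
theorem stmt17 {A Q : Type*} (δ γ : Q → A → Set Q) (q0 : Q) (w : ℕ → A)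
    (rk : ℕ → Q → ℕ)
    (hodd : ∀ ρ : ℕ → Q, IsRun δ q0 w ρ →
      ∃ N c, Odd c ∧ ∀ n ≥ N, rk n (ρ n) = c)
    (hdec : ∀ ρ : ℕ → Q, IsRun δ q0 w ρ → ∀ i,
      ρ (i + 1) ∈ γ (ρ i) (w i) →
        rk (i + 1) (ρ (i + 1)) ≤ 2 * (rk i (ρ i) / 2)) :
    ∀ ρ : ℕ → Q, IsRun δ q0 w ρ → ¬ RejRun γ w ρ := by
  intro ρ hρ hrej
  obtain ⟨N, c, hc, hconst⟩ := hodd ρ hρ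
  obtain ⟨i, hiN, hrejp⟩ := hrej N
  have h1 := hdec ρ hρ i hrejp
  rw [hconst i hiN, hconst (i + 1) (le_trans hiN (Nat.le_succ i))] at h1
  obtain ⟨k, hk⟩ := hc
  omega
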